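/- For any commutative ring R in which p is nilpotent, p is nilpotent in the truncated Witt vector ring W_n(R) for every n ≥ 0. -/
import Mathlib

open Function

private theorem iterate_verschiebung_coeff_lt {p : ℕ} [Fact p.Prime] {R : Type*} [CommRing R]
    (y : WittVector p R) (m : ℕ) : ∀ i < m, (WittVector.verschiebung^[m] y).coeff i = 0 := by
  induction m with
  | zero => intro i hi; omega
  | succ m ih =>
    intro i hi
    rw [iterate_succ_apply']
    cases i with
    | zero => exact WittVector.verschiebung_coeff_zero _
    | succ i =>
      rw [WittVector.verschiebung_coeff_succ]
      exact ih i (by omega)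

theorem p_nilpotent_truncatedWittVector (p : ℕ) [Fact p.Prime] (R : Type*) [CommRing R]
    (h : ∃ k : ℕ, (p : R) ^ k = 0) (n : ℕ) :
    ∃ k : ℕ, (p : TruncatedWittVector p (n + 1) R) ^ k = 0 := by
  obtain ⟨k, hk⟩ := h
  -- constant coefficient of (p : 𝕎 R)^k is zero
  have hc0 : ((p : WittVector p R) ^ k).coeff 0 = 0 := by
    have : ((p : WittVector p R) ^ k).coeff 0
        = WittVector.constantCoeff ((p : WittVector p R) ^ k) := rfl
    rw [this, map_pow, map_natCast, hk]
  induction n with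
  | zero =>
    refine ⟨k, ?_⟩
    have : (p : TruncatedWittVector p 1 R) ^ k
        = WittVector.truncate 1 ((p : WittVector p R) ^ k) := by
      rw [map_pow, map_natCast]
    rw [this]
    apply TruncatedWittVector.ext
    intro i
    rw [WittVector.coeff_truncate, TruncatedWittVector.coeff_zero]
    have hi : (i : ℕ) = 0 := by omega
    rw [hi, hc0]
  | succ n ih =>
    obtain ⟨j, hj⟩ := ih
    refine ⟨j + k, ?_⟩
    set m := n + 1 with hm
    set x := (p : WittVector p R) ^ j with hx
    -- x has vanishing coefficients below m
    have hxc : ∀ i < m, x.coeff i = 0 := by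
      rw [← WittVector.mem_ker_truncate, RingHom.mem_ker, hx, map_pow, map_natCast, hj]
    have hxV : x = WittVector.verschiebung^[m] (x.shift m) :=
      WittVector.eq_iterate_verschiebung hxc
    -- the full product
    have h2 : ∀ l : ℕ, WittVector.frobenius^[l] ((p : WittVector p R) ^ k)
        = ((p ^ k : ℕ) : WittVector p R) := by
      intro l
      induction l with
      | zero => simp [Nat.cast_pow]
      | succ l ihl2 => rw [iterate_succ_apply', ihl2, map_natCast]
    have key : ((p : WittVector p R) ^ (j + k))
        = WittVector.verschiebung^[m]
            (x.shift m * WittVector.frobenius^[m] ((p : WittVector p R) ^ k)) := by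
      have hml := WittVector.iterate_verschiebung_mul_left (x.shift m)
        ((p : WittVector p R) ^ k) m
      rw [← hxV] at hml
      rw [pow_add, ← hx, ← hml, mul_comm]
    have hFc : ∀ l : ℕ, (WittVector.frobenius^[l] ((p : WittVector p R) ^ k)).coeff 0 = 0 := by
      intro l
      rw [h2]
      have : (((p ^ k : ℕ) : WittVector p R)).coeff 0
          = WittVector.constantCoeff (((p ^ k : ℕ) : WittVector p R)) := rfl
      rw [this, map_natCast]
      push_cast
      exact hk
    -- now show all coefficients below m+1 vanish
    have hcoeffs : ∀ i < m + 1, ((p : WittVector p R) ^ (j + k)).coeff i = 0 := by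
      intro i hi
      rcases lt_or_eq_of_le (Nat.lt_succ_iff.mp hi) with hlt | heq
      · rw [key]; exact iterate_verschiebung_coeff_lt _ m i hlt
      · subst heq
        rw [key]
        have := WittVector.iterate_verschiebung_coeff
          (x.shift m * WittVector.frobenius^[m] ((p : WittVector p R) ^ k)) m 0
        rw [zero_add] at this
        rw [this, WittVector.mul_coeff_zero, hFc, mul_zero]
    have : (p : TruncatedWittVector p (n + 1 + 1) R) ^ (j + k)
        = WittVector.truncate (n + 1 + 1) ((p : WittVector p R) ^ (j + k)) := by
      rw [map_pow, map_natCast]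
    rw [this]
    apply TruncatedWittVector.ext
    intro i
    rw [WittVector.coeff_truncate, TruncatedWittVector.coeff_zero]
    exact hcoeffs i (by omega)
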